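/- Let F be a linearly ordered field, n ≥ 3, and let L_1, …, L_n be a line arrangement in F² given by affine functions f_i. With indices modulo n, let V_i = L_i ∩ L_{i+1}, and suppose that for each i there is a sign ε_i ∈ {−1, +1} such that ε_i · f_i(V_k) > 0 for every k ∉ {i−1, i} (so the lines form a global n-gonality). Then every unbounded region R_δ of the arrangement satisfies #E(δ) ≤ 4; that is, when there is global cyclicity there are no unbounded gonalities higher than unbounded 4-gonalities. -/

import Mathlib

/-- The affine functional `p ↦ a i * p.1 + b i * p.2 - c i` cutting out the `i`-th line. -/
def arrLine {F : Type*} [Field F] [LinearOrder F] [IsStrictOrderedRing F] {n : ℕ} (a b c : Fin n → F)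
    (i : Fin n) (p : F × F) : F :=
  a i * p.1 + b i * p.2 - c i

/-- The open region of the arrangement associated to the sign vector `δ`
(`true ↦ +1`, `false ↦ -1`). -/
def arrRegion {F : Type*} [Field F] [LinearOrder F] [IsStrictOrderedRing F] {n : ℕ} (a b c : Fin n → F)
    (δ : Fin n → Bool) : Set (F × F) :=
  {p : F × F | ∀ i : Fin n, 0 < (if δ i then (1 : F) else -1) * arrLine a b c i p}

/-- A subset of the plane is unbounded if it contains a ray. -/
def arrUnbounded {F : Type*} [Field F] [LinearOrder F] [IsStrictOrderedRing F] (R : Set (F × F)) : Prop :=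
  ∃ v w : F × F, w ≠ 0 ∧ ∀ t : F, 0 ≤ t → v + t • w ∈ R

/-- The gonality `#E(δ)` of the region of the sign vector `δ`: the number of indices `i`
such that some point of the line `L i` satisfies all the other strict inequalities. -/
noncomputable def arrGonality {F : Type*} [Field F] [LinearOrder F] [IsStrictOrderedRing F] {n : ℕ}
    (a b c : Fin n → F) (δ : Fin n → Bool) : ℕ :=
  Set.ncard {i : Fin n | ∃ p : F × F, arrLine a b c i p = 0 ∧
    ∀ j : Fin n, j ≠ i → 0 < (if δ j then (1 : F) else -1) * arrLine a b c j p}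

namespace ArrAux

variable {F : Type*} [Field F] [LinearOrder F] [IsStrictOrderedRing F]

/-- 2D cross product. -/
def cross (u v : F × F) : F := u.1 * v.2 - u.2 * v.1

/-- Signed area bracket of three points. -/
def br (A B C : F × F) : F := cross (B - A) (C - A)

lemma br_expand (A B C : F × F) :
    br A B C = (B.1 - A.1) * (C.2 - A.2) - (B.2 - A.2) * (C.1 - A.1) := by
  simp [br, cross]

lemma br_cyc (A B C : F × F) : br A B C = br B C A := by
  simp [br_expand]; ring

lemma br_swap (A B C : F × F) : br A C B = -br A B C := by
  simp [br_expand]; ring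

lemma br_self (A B : F × F) : br A B B = 0 := by
  simp [br_expand]; ring

lemma br_bary (A B C D E : F × F) :
    br D B C * br E D A + br A D C * br E D B + br A B D * br E D C
      = br A B C * br E D D := by
  simp [br_expand]; ring

lemma br_fourpt (A B C D : F × F) : br B C D = br A C D + br A B C - br A B D := by
  simp [br_expand]; ring

lemma cramer_point1 (A B C D : F × F) :
    A.1 * (br A C D + br A B C) + br A B D * (C.1 - A.1)
      = B.1 * (br A C D + br A B C) + br A B C * (D.1 - B.1) := by
  simp [br_expand]; ring

lemma cramer_point2 (A B C D : F × F) :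
    A.2 * (br A C D + br A B C) + br A B D * (C.2 - A.2)
      = B.2 * (br A C D + br A B C) + br A B C * (D.2 - B.2) := by
  simp [br_expand]; ring

/-- Cramer-type identity: if `(aa,bb)` kills `e`, the functional and `cross e ·`
are proportional. -/
lemma cramer (aa bb : F) (e u u' : F × F) (he : aa * e.1 + bb * e.2 = 0) :
    (aa * u.1 + bb * u.2) * cross e u' = (aa * u'.1 + bb * u'.2) * cross e u := by
  simp only [cross]
  linear_combination (u.1 * u'.2 - u.2 * u'.1) * he

lemma Nu_zero (aa bb : F) (e u : F × F) (he : aa * e.1 + bb * e.2 = 0)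
    (hc : cross e u = 0) (hen : e ≠ 0) : aa * u.1 + bb * u.2 = 0 := by
  have h1 : (aa * u.1 + bb * u.2) * e.1 = 0 := by
    simp only [cross] at hc; linear_combination u.1 * he + bb * hc
  have h2 : (aa * u.1 + bb * u.2) * e.2 = 0 := by
    simp only [cross] at hc; linear_combination u.2 * he - aa * hc
  rcases mul_eq_zero.mp h1 with h | h
  · exact h
  rcases mul_eq_zero.mp h2 with h' | h'
  · exact h'
  exact absurd (Prod.ext h h') hen

/-- Two vectors killed by the same nonzero functional are parallel. -/
lemma cross_eq_zero (aa bb : F) (e u : F × F) (hab : ¬(aa = 0 ∧ bb = 0))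
    (he : aa * e.1 + bb * e.2 = 0) (hu : aa * u.1 + bb * u.2 = 0) :
    cross e u = 0 := by
  rcases not_and_or.mp hab with h | h
  · have : aa * cross e u = 0 := by simp only [cross]; linear_combination u.2 * he - e.2 * hu
    exact (mul_eq_zero.mp this).resolve_left h
  · have : bb * cross e u = 0 := by simp only [cross]; linear_combination (-u.1) * he + e.1 * hu
    exact (mul_eq_zero.mp this).resolve_left h

/-- A vector parallel to a nonzero vector is a scalar multiple. -/
lemma exists_scalar (e u : F × F) (he : e ≠ 0) (h : cross e u = 0) :
    ∃ t : F, u = t • e := by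
  have he' : ¬(e.1 = 0 ∧ e.2 = 0) := fun h' => he (Prod.ext h'.1 h'.2)
  have hcross : e.1 * u.2 = e.2 * u.1 := by
    simpa [cross, sub_eq_zero] using h
  rcases not_and_or.mp he' with h1 | h2
  · refine ⟨u.1 / e.1, ?_⟩
    apply Prod.ext
    · simp only [Prod.smul_fst, Prod.smul_snd, smul_eq_mul]; field_simp
    · simp only [Prod.smul_fst, Prod.smul_snd, smul_eq_mul]; field_simp; linarith [hcross]
  · refine ⟨u.2 / e.2, ?_⟩
    apply Prod.ext
    · simp only [Prod.smul_fst, Prod.smul_snd, smul_eq_mul]; field_simp; linarith [hcross]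
    · simp only [Prod.smul_fst, Prod.smul_snd, smul_eq_mul]; field_simp

lemma pos_transfer (σ x y : F) (h1 : 0 < σ * x) (h2 : 0 < y * x) : 0 < σ * y := by
  have hx : x ≠ 0 := by rintro rfl; simp at h1
  by_contra hle
  push_neg at hle
  nlinarith [mul_pos h1 h2, mul_self_pos.mpr hx]

lemma sign_mul_pos {σ x y : F} (hσσ : σ * σ = 1) (hx : 0 < σ * x) (hy : 0 < σ * y) :
    0 < x * y := by
  have h : x * y = (σ * x) * (σ * y) := by linear_combination (-(x*y)) * hσσ
  rw [h]; exact mul_pos hx hy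

lemma sign_mul_nonneg {σ x y : F} (hσσ : σ * σ = 1) (hx : 0 ≤ σ * x) (hy : 0 ≤ σ * y) :
    0 ≤ x * y := by
  have h : x * y = (σ * x) * (σ * y) := by linear_combination (-(x*y)) * hσσ
  rw [h]; exact mul_nonneg hx hy

section FinLemmas

variable {n : ℕ} [NeZero n]

lemma val_one' (h3 : 3 ≤ n) : (1 : Fin n).val = 1 := by
  rw [Fin.val_one' n]; exact Nat.mod_eq_of_lt (by omega)

lemma val_add_one (h3 : 3 ≤ n) (q : Fin n) :
    (q + 1).val = if q.val + 1 = n then 0 else q.val + 1 := by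
  have h := q.isLt
  have h1 : (q + 1).val = (q.val + (1 : Fin n).val) % n := by
    simp [Fin.add_def]
  rw [val_one' h3] at h1
  rcases Nat.lt_or_ge (q.val + 1) n with h' | h'
  · rw [h1, Nat.mod_eq_of_lt h']
    rw [if_neg (by omega)]
  · have he : q.val + 1 = n := by omega
    rw [h1, he, Nat.mod_self]; simp

lemma val_sub_one (h3 : 3 ≤ n) (q : Fin n) :
    (q - 1).val = if q.val = 0 then n - 1 else q.val - 1 := by
  have h := q.isLt
  have h1 : (q - 1).val = (n - (1 : Fin n).val + q.val) % n := by
    simp [Fin.sub_def]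
  rw [val_one' h3] at h1
  rcases Nat.eq_zero_or_pos q.val with h' | h'
  · rw [h1, h']
    simp only [if_pos rfl, Nat.add_zero]
    exact Nat.mod_eq_of_lt (by omega)
  · have he : n - 1 + q.val = n + (q.val - 1) := by omega
    rw [h1, he, Nat.add_mod_left, Nat.mod_eq_of_lt (by omega), if_neg (by omega)]

lemma add_one_ne (h3 : 3 ≤ n) (i : Fin n) : i + 1 ≠ i := by
  intro h
  have h1 := val_add_one h3 i
  rw [h] at h1
  split at h1 <;> omega

lemma sub_one_ne (h3 : 3 ≤ n) (i : Fin n) : i - 1 ≠ i := by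
  intro h
  have h1 := val_sub_one h3 i
  rw [h] at h1
  have := i.isLt
  split at h1 <;> omega

lemma add_one_ne_sub_one (h3 : 3 ≤ n) (i : Fin n) : i + 1 ≠ i - 1 := by
  intro h
  have h1 := val_add_one h3 i
  have h2 := val_sub_one h3 i
  rw [← h, h1] at h2
  have := i.isLt
  split at h2 <;> split at h2 <;> omega

lemma sub_one_add_one (i : Fin n) : i - 1 + 1 = i := by
  rw [sub_add_cancel]

lemma add_one_sub_one (i : Fin n) : i + 1 - 1 = i := by
  rw [add_sub_cancel_right]

lemma add_two_ne (h3 : 3 ≤ n) (i : Fin n) : i + 1 + 1 ≠ i := by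
  intro h
  have h1 := val_add_one h3 i
  have h2 := val_add_one h3 (i + 1)
  rw [h] at h2
  have := i.isLt
  split at h1 <;> split at h2 <;> omega

lemma sub_two_ne (h3 : 3 ≤ n) (i : Fin n) : i - 1 - 1 ≠ i := by
  intro h
  have h1 := val_sub_one h3 i
  have h2 := val_sub_one h3 (i - 1)
  rw [h1] at h2
  rw [h] at h2
  have := i.isLt
  split at h2 <;> split at h2 <;> omega

end FinLemmas

section Sigma

variable {n : ℕ} [NeZero n]

theorem exists_sigma
    (h3 : 3 ≤ n) (a b c : Fin n → F) (V : Fin n → F × F)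
    (hV : ∀ i : Fin n, arrLine a b c i (V i) = 0 ∧ arrLine a b c (i + 1) (V i) = 0)
    (ε : Fin n → F) (hε : ∀ i : Fin n, ε i = 1 ∨ ε i = -1)
    (hside : ∀ i k : Fin n, k ≠ i - 1 → k ≠ i → 0 < ε i * arrLine a b c i (V k)) :
    ∃ σ : F, (σ = 1 ∨ σ = -1) ∧
      ∀ i k : Fin n, k ≠ i - 1 → k ≠ i → 0 < σ * br (V (i-1)) (V i) (V k) := by
  classical
  have one_valid1 : (1 : Fin n) ≠ 0 - 1 := by
    intro h
    have h2 := val_sub_one h3 (0 : Fin n)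
    have h4 := congrArg Fin.val h
    rw [val_one' h3] at h4
    rw [← h4] at h2
    have hz : (0 : Fin n).val = 0 := rfl
    rw [hz] at h2
    simp at h2
    omega
  have one_valid2 : (1 : Fin n) ≠ 0 := by
    intro h
    have h1 := val_one' h3
    rw [h] at h1
    simp at h1
  set f : Fin n → F × F → F := arrLine a b c with hf
  -- line i vanishes on V (i-1) and V i
  have hz2 : ∀ i : Fin n, f i (V i) = 0 := fun i => (hV i).1
  have hz1 : ∀ i : Fin n, f i (V (i-1)) = 0 := by
    intro i
    have := (hV (i-1)).2
    rwa [sub_one_add_one i] at this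
  -- f as linear functional of difference from V (i-1)
  have hfN : ∀ i k : Fin n, f i (V k)
      = a i * (V k - V (i-1)).1 + b i * (V k - V (i-1)).2 := by
    intro i k
    have h0 := hz1 i
    simp only [hf, arrLine, Prod.fst_sub, Prod.snd_sub] at *
    linear_combination h0
  have he0 : ∀ i : Fin n, a i * (V i - V (i-1)).1 + b i * (V i - V (i-1)).2 = 0 := by
    intro i
    have h0 := hz1 i
    have h1 := hz2 i
    simp only [hf, arrLine, Prod.fst_sub, Prod.snd_sub] at *
    linear_combination h1 - h0
  -- vertices distinct
  have hVne : ∀ i : Fin n, V i - V (i-1) ≠ 0 := by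
    intro i h
    have heq : V (i-1) = V i := by
      have := sub_eq_zero.mp h; exact this.symm
    have hs := hside (i+1) (i-1)
      (by rw [add_one_sub_one i]; exact sub_one_ne h3 i)
      (fun hh => (add_one_ne_sub_one h3 i) hh.symm)
    rw [heq] at hs
    have := (hV i).2
    rw [this] at hs
    simp at hs
  -- the bracket as cross with edge vector
  have hcr : ∀ i k : Fin n, br (V (i-1)) (V i) (V k)
      = cross (V i - V (i-1)) (V k - V (i-1)) := fun i k => rfl
  -- nonvanishing
  have hnz : ∀ i k : Fin n, k ≠ i - 1 → k ≠ i → br (V (i-1)) (V i) (V k) ≠ 0 := by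
    intro i k h1 h2 h0
    rw [hcr] at h0
    have := Nu_zero (a i) (b i) _ _ (he0 i) h0 (hVne i)
    rw [← hfN] at this
    have hs := hside i k h1 h2
    rw [this] at hs
    simp at hs
  -- same-sign product
  have hprod : ∀ i k k' : Fin n, k ≠ i - 1 → k ≠ i → k' ≠ i - 1 → k' ≠ i →
      0 < br (V (i-1)) (V i) (V k) * br (V (i-1)) (V i) (V k') := by
    intro i k k' hk1 hk2 hk1' hk2'
    have hident := cramer (a i) (b i) (V i - V (i-1)) (V k - V (i-1)) (V k' - V (i-1)) (he0 i)
    rw [← hfN, ← hfN, ← hcr, ← hcr] at hident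
    set X := f i (V k) with hX
    set Y := f i (V k') with hY
    set cc := br (V (i-1)) (V i) (V k) with hcc
    set cc' := br (V (i-1)) (V i) (V k') with hcc'
    have hXpos := hside i k hk1 hk2
    have hYpos := hside i k' hk1' hk2'
    rw [← hX] at hXpos
    rw [← hY] at hYpos
    have hee : ε i * ε i = 1 := by rcases hε i with h | h <;> rw [h] <;> ring
    have hXY : 0 < X * Y := by
      have h' : X * Y = (ε i * X) * (ε i * Y) := by linear_combination (-(X*Y)) * hee
      rw [h']; exact mul_pos hXpos hYpos
    have hXne : X ≠ 0 := by intro h; rw [h] at hXpos; simp at hXpos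
    have hccne : cc ≠ 0 := hnz i k hk1 hk2
    have key : (cc * cc') * (X * X) = (cc * cc) * (X * Y) := by
      linear_combination (cc * X) * hident
    by_contra hle
    push_neg at hle
    have h5 : 0 ≤ (-(cc * cc')) * (X * X) :=
      mul_nonneg (neg_nonneg.mpr hle) (mul_self_nonneg X)
    nlinarith [mul_pos (mul_self_pos.mpr hccne) hXY]
  -- define sigma
  set σ : F := if 0 < br (V (0-1)) (V 0) (V 1) then 1 else -1 with hσdef
  have hσpm : σ = 1 ∨ σ = -1 := by
    rw [hσdef]; split <;> simp
  refine ⟨σ, hσpm, ?_⟩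
  -- Q i : 0 < σ * cr i (i+1)
  have hQ0 : 0 < σ * br (V (0-1)) (V 0) (V 1) := by
    rw [hσdef]
    split
    case isTrue h => rw [one_mul]; exact h
    case isFalse h =>
      have := hnz 0 1 one_valid1 one_valid2
      have hlt : br (V (0-1)) (V 0) (V 1) < 0 := lt_of_le_of_ne (not_lt.mp h) this
      nlinarith
  have hQstep : ∀ i : Fin n, 0 < σ * br (V (i-1)) (V i) (V (i+1)) →
      0 < σ * br (V (i+1-1)) (V (i+1)) (V (i+1+1)) := by
    intro i hQi
    have hident : br (V (i+1-1)) (V (i+1)) (V (i-1)) = br (V (i-1)) (V i) (V (i+1)) := by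
      rw [add_one_sub_one i]
      exact (br_cyc (V (i-1)) (V i) (V (i+1))).symm
    have hpr := hprod (i+1) (i+1+1) (i-1)
      (by rw [add_one_sub_one i]; exact add_two_ne h3 i)
      (add_one_ne h3 (i+1))
      (by rw [add_one_sub_one i]; exact sub_one_ne h3 i)
      (fun hh => (add_one_ne_sub_one h3 i) hh.symm)
    rw [hident] at hpr
    exact pos_transfer σ _ _ hQi hpr
  have hQall : ∀ i : Fin n, 0 < σ * br (V (i-1)) (V i) (V (i+1)) := by
    have hmain : ∀ j : ℕ, ∀ hj : j < n, 0 < σ * br (V (⟨j, hj⟩ - 1)) (V ⟨j, hj⟩) (V (⟨j, hj⟩ + 1)) := by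
      intro j
      induction j with
      | zero =>
        intro hj
        have h00 : (⟨0, hj⟩ : Fin n) = 0 := rfl
        rw [h00, zero_add]
        exact hQ0
      | succ j ihj =>
        intro hj
        have hjn : j < n := Nat.lt_of_succ_lt hj
        have hstep := hQstep ⟨j, hjn⟩ (ihj hjn)
        have h1n : (1 : Fin n).val = 1 := by
          rw [Fin.val_one' n]; exact Nat.mod_eq_of_lt (by omega)
        have hcast : (⟨j, hjn⟩ : Fin n) + 1 = ⟨j+1, hj⟩ := by
          apply Fin.ext
          show ((⟨j, hjn⟩ : Fin n) + 1).val = j + 1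
          rw [Fin.add_def]
          show ((⟨j, hjn⟩ : Fin n).val + (1 : Fin n).val) % n = j + 1
          rw [h1n]
          exact Nat.mod_eq_of_lt hj
        rwa [hcast] at hstep
    intro i
    have : i = ⟨i.val, i.isLt⟩ := by apply Fin.ext; rfl
    rw [this]
    exact hmain i.val i.isLt
  intro i k hk1 hk2
  have hpr := hprod i k (i+1) hk1 hk2
    (fun hh => (add_one_ne_sub_one h3 i) hh)
    (add_one_ne h3 i)
  exact pos_transfer σ _ _ (hQall i) hpr


end Sigma

section Main

variable {n : ℕ} [NeZero n]

lemma lemT_aux (h3 : 3 ≤ n) (V : Fin n → F × F) (σ : F) (hσ : σ = 1 ∨ σ = -1)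
    (hT0 : ∀ i k : Fin n, k ≠ i - 1 → k ≠ i → 0 < σ * br (V (i-1)) (V i) (V k)) : ∀ m : ℕ, ∀ p q r : Fin n, q.val - p.val = m → p.val < q.val → q.val < r.val →
    0 < σ * br (V p) (V q) (V r) := by
  have hσσ : σ * σ = 1 := by rcases hσ with h | h <;> rw [h] <;> ring
  intro m
  induction m using Nat.strong_induction_on with
  | _ m IH =>
    intro p q r hm hpq hqr
    have hrlt := r.isLt
    have hq1 : (q - 1).val = q.val - 1 := by
      rw [val_sub_one h3]; rw [if_neg (by omega)]
    have hr1 : (r - 1).val = r.val - 1 := by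
      rw [val_sub_one h3]; rw [if_neg (by omega)]
    rcases Nat.lt_or_ge p.val (q.val - 1) with hpq2 | hpq2
    case inr =>
      -- q.val = p.val + 1 : base case
      have hqp : q - 1 = p := Fin.ext (by omega)
      have := hT0 q r (by intro h; have hh := congrArg Fin.val h; omega) (by intro h; have hh := congrArg Fin.val h; omega)
      rwa [hqp] at this
    case inl =>
    rcases Nat.lt_or_ge (q.val) (r.val - 1) with hqr2 | hqr2
    case inr =>
      -- r.val = q.val + 1
      have hrq : r - 1 = q := Fin.ext (by omega)
      have h4 := hT0 r p (by intro h; have hh := congrArg Fin.val h; omega) (by intro h; have hh := congrArg Fin.val h; omega)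
      rw [hrq] at h4
      rwa [br_cyc]
    case inl =>
      -- main case : q ≥ p + 2, r ≥ q + 2 (in vals)
      have hABC : 0 < σ * br (V p) (V (q-1)) (V q) :=
        IH (q.val - 1 - p.val) (by omega) p (q-1) q (by omega) (by omega) (by omega)
      have hABD : 0 < σ * br (V p) (V (q-1)) (V r) :=
        IH (q.val - 1 - p.val) (by omega) p (q-1) r (by omega) (by omega) (by omega)
      have hBCD : 0 < σ * br (V (q-1)) (V q) (V r) :=
        hT0 q r (by intro h; have hh := congrArg Fin.val h; omega) (by intro h; have hh := congrArg Fin.val h; omega)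
      have hEDA : 0 < σ * br (V (r-1)) (V r) (V p) :=
        hT0 r p (by intro h; have hh := congrArg Fin.val h; omega) (by intro h; have hh := congrArg Fin.val h; omega)
      have hEDB : 0 < σ * br (V (r-1)) (V r) (V (q-1)) :=
        hT0 r (q-1) (by intro h; have hh := congrArg Fin.val h; omega) (by intro h; have hh := congrArg Fin.val h; omega)
      have hEDC : 0 < σ * br (V (r-1)) (V r) (V q) :=
        hT0 r q (by intro h; have hh := congrArg Fin.val h; omega) (by intro h; have hh := congrArg Fin.val h; omega)
      by_contra hcon
      push_neg at hcon
      set A := V p; set B := V (q-1); set C := V q; set D := V r; set E := V (r-1)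
      have key := br_bary A B C D E
      rw [br_self] at key
      have hADC : 0 ≤ σ * br A D C := by
        rw [br_swap A C D]; linarith
      have t1 : 0 < br D B C * br E D A := by
        refine sign_mul_pos hσσ ?_ hEDA
        rw [br_cyc D B C]; exact hBCD
      have t2 : 0 ≤ br A D C * br E D B := sign_mul_nonneg hσσ hADC (le_of_lt hEDB)
      have t3 : 0 < br A B D * br E D C := sign_mul_pos hσσ hABD hEDC
      rw [mul_zero] at key
      linarith


theorem quad_lemma
    (V : Fin n → F × F) (σ : F) (hσ : σ = 1 ∨ σ = -1)
    (hT : ∀ p q r : Fin n, p.val < q.val → q.val < r.val → 0 < σ * br (V p) (V q) (V r))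
    (α β : F) (Q1 Q2 Q3 Q4 : Fin n)
    (h12v : Q1.val < Q2.val) (h23v : Q2.val < Q3.val) (h34v : Q3.val < Q4.val)
    (g : Fin n → F) (hg : ∀ k, g k = α * (V k).1 + β * (V k).2)
    (h12 : g Q1 < g Q2) (h32 : g Q3 < g Q2)
    (h14 : g Q1 < g Q4) (h34 : g Q3 < g Q4) : False := by
  have hσne : σ ≠ 0 := by rcases hσ with h | h <;> rw [h] <;> norm_num
  set A := V Q1; set B := V Q2; set C := V Q3; set D := V Q4
  have k1 : 0 < σ * br A B C := hT Q1 Q2 Q3 h12v h23v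
  have k2 : 0 < σ * br A B D := hT Q1 Q2 Q4 h12v (lt_trans h23v h34v)
  have k3 : 0 < σ * br A C D := hT Q1 Q3 Q4 (lt_trans h12v h23v) h34v
  have k4 : 0 < σ * br B C D := hT Q2 Q3 Q4 h23v h34v
  set Δ := br A C D + br A B C with hΔdef
  have hσΔ : 0 < σ * Δ := by
    have : σ * Δ = σ * br A C D + σ * br A B C := by rw [hΔdef]; ring
    linarith
  have hΔne : Δ ≠ 0 := by
    intro h; rw [h, mul_zero] at hσΔ; exact lt_irrefl 0 hσΔ
  set τ := br A B D / Δ with hτdef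
  set ρ := br A B C / Δ with hρdef
  have hτpos : 0 < τ := by
    rw [hτdef, show br A B D / Δ = (σ * br A B D) / (σ * Δ) from
      (mul_div_mul_left _ _ hσne).symm]
    exact div_pos k2 hσΔ
  have hρpos : 0 < ρ := by
    rw [hρdef, show br A B C / Δ = (σ * br A B C) / (σ * Δ) from
      (mul_div_mul_left _ _ hσne).symm]
    exact div_pos k1 hσΔ
  have hfour := br_fourpt A B C D
  have hτlt : τ < 1 := by
    have h1 : 1 - τ = br B C D / Δ := by
      rw [hτdef]; field_simp; linear_combination -hfour
    have h2 : 0 < br B C D / Δ := by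
      rw [show br B C D / Δ = (σ * br B C D) / (σ * Δ) from
        (mul_div_mul_left _ _ hσne).symm]
      exact div_pos k4 hσΔ
    linarith
  have hρlt : ρ < 1 := by
    have h1 : 1 - ρ = br A C D / Δ := by
      rw [hρdef]; field_simp
      linear_combination hΔdef
    have h2 : 0 < br A C D / Δ := by
      rw [show br A C D / Δ = (σ * br A C D) / (σ * Δ) from
        (mul_div_mul_left _ _ hσne).symm]
      exact div_pos k3 hσΔ
    linarith
  -- the diagonal intersection point evaluated by g
  set X : F × F := (A.1 + τ * (C.1 - A.1), A.2 + τ * (C.2 - A.2)) with hXdef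
  have hX1 : X.1 = B.1 + ρ * (D.1 - B.1) := by
    show A.1 + τ * (C.1 - A.1) = B.1 + ρ * (D.1 - B.1)
    rw [hτdef, hρdef]
    field_simp
    linear_combination cramer_point1 A B C D
  have hX2 : X.2 = B.2 + ρ * (D.2 - B.2) := by
    show A.2 + τ * (C.2 - A.2) = B.2 + ρ * (D.2 - B.2)
    rw [hτdef, hρdef]
    field_simp
    linear_combination cramer_point2 A B C D
  have hgX1 : α * X.1 + β * X.2 = (1 - τ) * g Q1 + τ * g Q3 := by
    rw [hg, hg, hXdef]; simp only; ring
  have hgX2 : α * X.1 + β * X.2 = (1 - ρ) * g Q2 + ρ * g Q4 := by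
    rw [hX1, hX2, hg, hg]; ring
  rcases le_total (g Q2) (g Q4) with hbd | hbd
  · have t1 : (1 - τ) * g Q1 < (1 - τ) * g Q2 := by
      apply mul_lt_mul_of_pos_left h12; linarith
    have t2 : τ * g Q3 < τ * g Q2 := mul_lt_mul_of_pos_left h32 hτpos
    have t3 : ρ * g Q2 ≤ ρ * g Q4 := by
      apply mul_le_mul_of_nonneg_left hbd; linarith
    linarith
  · have t1 : (1 - τ) * g Q1 < (1 - τ) * g Q4 := by
      apply mul_lt_mul_of_pos_left h14; linarith
    have t2 : τ * g Q3 < τ * g Q4 := mul_lt_mul_of_pos_left h34 hτpos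
    have t3 : (1 - ρ) * g Q4 ≤ (1 - ρ) * g Q2 := by
      apply mul_le_mul_of_nonneg_left hbd; linarith
    linarith


theorem alt_false
    (h3 : 3 ≤ n)
    (V : Fin n → F × F) (σ : F) (hσ : σ = 1 ∨ σ = -1)
    (hT : ∀ p q r : Fin n, p.val < q.val → q.val < r.val → 0 < σ * br (V p) (V q) (V r))
    (quad : ∀ (α β : F) (g : Fin n → F), (∀ k, g k = α * (V k).1 + β * (V k).2) →
      ∀ Q1 Q2 Q3 Q4 : Fin n, Q1.val < Q2.val → Q2.val < Q3.val → Q3.val < Q4.val →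
      g Q1 < g Q2 → g Q3 < g Q2 → g Q1 < g Q4 → g Q3 < g Q4 → False)
    (w : F × F) (T : Fin n → F) (s : F) (hs : s = 1 ∨ s = -1)
    (hTH : ∀ i : Fin n, 0 < T i * (σ * (((V i).1 * w.2 - (V i).2 * w.1)
      - ((V (i-1)).1 * w.2 - (V (i-1)).2 * w.1))))
    (q1 q2 q3 q4 : Fin n)
    (h12v : q1.val < q2.val) (h23v : q2.val < q3.val) (h34v : q3.val < q4.val)
    (ht1 : T q1 = s) (ht2 : T q2 = -s) (ht3 : T q3 = s) (ht4 : T q4 = -s) :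
    False := by
  classical
  set g : Fin n → F := fun k => s * σ * ((V k).1 * w.2 - (V k).2 * w.1) with hgdef
  have hg : ∀ k, g k = (s * σ * w.2) * (V k).1 + (-(s * σ * w.1)) * (V k).2 := by
    intro k; rw [hgdef]; ring
  have hgneg : ∀ k, -(g k) = (-(s * σ * w.2)) * (V k).1 + (s * σ * w.1) * (V k).2 := by
    intro k; rw [hgdef]; ring
  have hss : s * s = 1 := by rcases hs with h | h <;> rw [h] <;> ring
  have asc : ∀ i : Fin n, T i = s → g (i - 1) < g i := by
    intro i hi
    have h := hTH i
    rw [hi] at h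
    have : g i - g (i - 1) = s * (σ * (((V i).1 * w.2 - (V i).2 * w.1)
      - ((V (i-1)).1 * w.2 - (V (i-1)).2 * w.1))) := by rw [hgdef]; ring
    nlinarith [h, this]
  have desc : ∀ i : Fin n, T i = -s → g i < g (i - 1) := by
    intro i hi
    have h := hTH i
    rw [hi] at h
    have heq : g i - g (i - 1) = s * (σ * (((V i).1 * w.2 - (V i).2 * w.1)
      - ((V (i-1)).1 * w.2 - (V (i-1)).2 * w.1))) := by rw [hgdef]; ring
    nlinarith [h, heq]
  -- extremizers over the four arcs
  have hq2pos : 0 < q2.val := by omega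
  have hq3pos : 0 < q3.val := by omega
  have hq4pos : 0 < q4.val := by omega
  have hq4lt := q4.isLt
  set S1 : Finset (Fin n) := Finset.univ.filter (fun i => q4.val ≤ i.val ∨ i.val < q1.val) with hS1
  set S2 : Finset (Fin n) := Finset.univ.filter (fun i => q1.val ≤ i.val ∧ i.val < q2.val) with hS2
  set S3 : Finset (Fin n) := Finset.univ.filter (fun i => q2.val ≤ i.val ∧ i.val < q3.val) with hS3
  set S4 : Finset (Fin n) := Finset.univ.filter (fun i => q3.val ≤ i.val ∧ i.val < q4.val) with hS4
  have hmem_iff1 : ∀ i : Fin n, i ∈ S1 ↔ (q4.val ≤ i.val ∨ i.val < q1.val) := by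
    intro i; simp [hS1]
  have hmem_iff2 : ∀ i : Fin n, i ∈ S2 ↔ (q1.val ≤ i.val ∧ i.val < q2.val) := by
    intro i; simp [hS2]
  have hmem_iff3 : ∀ i : Fin n, i ∈ S3 ↔ (q2.val ≤ i.val ∧ i.val < q3.val) := by
    intro i; simp [hS3]
  have hmem_iff4 : ∀ i : Fin n, i ∈ S4 ↔ (q3.val ≤ i.val ∧ i.val < q4.val) := by
    intro i; simp [hS4]
  obtain ⟨P1, hP1mem, hP1min⟩ := Finset.exists_min_image S1 g
    ⟨q4, (hmem_iff1 q4).mpr (Or.inl (le_refl _))⟩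
  obtain ⟨P2, hP2mem, hP2max⟩ := Finset.exists_max_image S2 g
    ⟨q1, (hmem_iff2 q1).mpr ⟨le_refl _, h12v⟩⟩
  obtain ⟨P3, hP3mem, hP3min⟩ := Finset.exists_min_image S3 g
    ⟨q2, (hmem_iff3 q2).mpr ⟨le_refl _, h23v⟩⟩
  obtain ⟨P4, hP4mem, hP4max⟩ := Finset.exists_max_image S4 g
    ⟨q3, (hmem_iff4 q3).mpr ⟨le_refl _, h34v⟩⟩
  rw [hmem_iff1] at hP1mem
  obtain ⟨hP2a, hP2b⟩ := (hmem_iff2 P2).mp hP2mem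
  obtain ⟨hP3a, hP3b⟩ := (hmem_iff3 P3).mp hP3mem
  obtain ⟨hP4a, hP4b⟩ := (hmem_iff4 P4).mp hP4mem
  -- membership of the comparison points
  have hm_q1s2 : q1 ∈ S2 := (hmem_iff2 q1).mpr ⟨le_refl _, h12v⟩
  have hm_q2s3 : q2 ∈ S3 := (hmem_iff3 q2).mpr ⟨le_refl _, h23v⟩
  have hm_q3s4 : q3 ∈ S4 := (hmem_iff4 q3).mpr ⟨le_refl _, h34v⟩
  have hm_q4s1 : q4 ∈ S1 := (hmem_iff1 q4).mpr (Or.inl (le_refl _))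
  have hv_q11 : (q1 - 1).val = if q1.val = 0 then n - 1 else q1.val - 1 := val_sub_one h3 q1
  have hm_q11s1 : q1 - 1 ∈ S1 := by
    rw [hmem_iff1, hv_q11]; split <;> omega
  have hm_q21s2 : q2 - 1 ∈ S2 := by
    rw [hmem_iff2, val_sub_one h3 q2, if_neg (by omega)]; omega
  have hm_q31s3 : q3 - 1 ∈ S3 := by
    rw [hmem_iff3, val_sub_one h3 q3, if_neg (by omega)]; omega
  have hm_q41s4 : q4 - 1 ∈ S4 := by
    rw [hmem_iff4, val_sub_one h3 q4, if_neg (by omega)]; omega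
  -- chains
  have c12 : g P1 < g P2 :=
    lt_of_le_of_lt (hP1min _ hm_q11s1) (lt_of_lt_of_le (asc q1 ht1) (hP2max _ hm_q1s2))
  have c32 : g P3 < g P2 :=
    lt_of_le_of_lt (hP3min _ hm_q2s3) (lt_of_lt_of_le (desc q2 ht2) (hP2max _ hm_q21s2))
  have c34 : g P3 < g P4 :=
    lt_of_le_of_lt (hP3min _ hm_q31s3) (lt_of_lt_of_le (asc q3 ht3) (hP4max _ hm_q3s4))
  have c14 : g P1 < g P4 :=
    lt_of_le_of_lt (hP1min _ hm_q4s1) (lt_of_lt_of_le (desc q4 ht4) (hP4max _ hm_q41s4))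
  -- val chains
  rcases hP1mem with hP1a | hP1b
  · -- q4 ≤ P1 : order P2 < P3 < P4 < P1, pattern high,low,high,low : use -g
    exact quad _ _ (fun k => -(g k)) hgneg P2 P3 P4 P1
      (by omega) (by omega) (by omega)
      (by show -(g P2) < -(g P3); linarith)
      (by show -(g P4) < -(g P3); linarith)
      (by show -(g P2) < -(g P1); linarith)
      (by show -(g P4) < -(g P1); linarith)
  · -- P1 < q1 : order P1 < P2 < P3 < P4
    exact quad _ _ g hg P1 P2 P3 P4
      (by omega) (by omega) (by omega)
      c12 c32 c14 c34


end Main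

end ArrAux
open ArrAux in
set_option maxHeartbeats 2000000 in
theorem unbounded_gonalities_le_four_of_global_cyclicity
    {F : Type*} [Field F] [LinearOrder F] [IsStrictOrderedRing F] (n : ℕ) [NeZero n] (hn : 3 ≤ n)
    (a b c : Fin n → F)
    (hnd : ∀ i : Fin n, (a i, b i) ≠ (0, 0))
    (hpar : ∀ i j : Fin n, i ≠ j → a i * b j ≠ a j * b i)
    (hconc : ∀ i j k : Fin n, i ≠ j → j ≠ k → i ≠ k →
      ¬ ∃ p : F × F, arrLine a b c i p = 0 ∧ arrLine a b c j p = 0 ∧ arrLine a b c k p = 0)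
    (V : Fin n → F × F)
    (hV : ∀ i : Fin n, arrLine a b c i (V i) = 0 ∧ arrLine a b c (i + 1) (V i) = 0)
    (ε : Fin n → F) (hε : ∀ i : Fin n, ε i = 1 ∨ ε i = -1)
    (hside : ∀ i k : Fin n, k ≠ i - 1 → k ≠ i → 0 < ε i * arrLine a b c i (V k)) :
    ∀ δ : Fin n → Bool, (arrRegion a b c δ).Nonempty → arrUnbounded (arrRegion a b c δ) →
      arrGonality a b c δ ≤ 4 := by
  intro δ _hne hunb
  classical
  obtain ⟨v, w0, hw0ne, hray⟩ := hunb
  set S : Fin n → F := fun j => if δ j then (1 : F) else -1 with hSdef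
  have hSpm : ∀ j, S j = 1 ∨ S j = -1 := by
    intro j; rw [hSdef]; by_cases h : δ j <;> simp [h]
  have hSne : ∀ j, S j ≠ 0 := by
    intro j; rcases hSpm j with h | h <;> rw [h] <;> norm_num
  have hS2 : ∀ j, S j * S j = 1 := by
    intro j; rcases hSpm j with h | h <;> rw [h] <;> norm_num
  have hε2 : ∀ j, ε j * ε j = 1 := by
    intro j; rcases hε j with h | h <;> rw [h] <;> norm_num
  have hlin : ∀ (i : Fin n) (q ww : F × F) (t : F),
      arrLine a b c i (q + t • ww) = arrLine a b c i q + t * (a i * ww.1 + b i * ww.2) := by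
    intro i q ww t
    simp only [arrLine, Prod.fst_add, Prod.snd_add, Prod.smul_fst, Prod.smul_snd, smul_eq_mul]
    ring
  have hregion : ∀ t : F, 0 ≤ t → ∀ i : Fin n,
      0 < S i * arrLine a b c i (v + t • w0) := by
    intro t ht i
    have hm := hray t ht
    simp only [arrRegion, Set.mem_setOf_eq] at hm
    exact hm i
  -- Step 1: weak recession inequalities
  have hd0 : ∀ i, 0 ≤ S i * (a i * w0.1 + b i * w0.2) := by
    intro i
    by_contra hlt
    push_neg at hlt
    have hv0 : 0 < S i * arrLine a b c i v := by
      have := hregion 0 le_rfl i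
      simpa using this
    set X := S i * arrLine a b c i v with hX
    set Dd := S i * (a i * w0.1 + b i * w0.2) with hD
    have hDne : Dd ≠ 0 := ne_of_lt hlt
    have ht0 : 0 ≤ X / (-Dd) := div_nonneg (le_of_lt hv0) (by linarith)
    have hmem := hregion (X / (-Dd)) ht0 i
    rw [hlin] at hmem
    have hexp : S i * (arrLine a b c i v + X / (-Dd) * (a i * w0.1 + b i * w0.2))
        = X + (X / (-Dd)) * Dd := by rw [hX, hD]; ring
    rw [hexp] at hmem
    have hXD : (X / (-Dd)) * Dd = -X := by
      rw [div_mul_eq_mul_div, div_eq_iff (show -Dd ≠ 0 by intro hh; apply hDne; linarith)]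
      ring
    rw [hXD] at hmem
    simp at hmem
  -- Step 2: perturb to strict recession inequalities
  have hstep2 : ∃ w : F × F, ∀ i, 0 < S i * (a i * w.1 + b i * w.2) := by
    by_cases hall : ∀ i, S i * (a i * w0.1 + b i * w0.2) ≠ 0
    · exact ⟨w0, fun i => lt_of_le_of_ne (hd0 i) (Ne.symm (hall i))⟩
    · push_neg at hall
      obtain ⟨i₀, hi₀⟩ := hall
      have hd00 : a i₀ * w0.1 + b i₀ * w0.2 = 0 := by
        rcases mul_eq_zero.mp hi₀ with h | h
        · exact absurd h (hSne i₀)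
        · exact h
      have huniq : ∀ i, i ≠ i₀ → a i * w0.1 + b i * w0.2 ≠ 0 := by
        intro i hi hzero
        have hD1 : (a i * b i₀ - a i₀ * b i) * w0.1 = 0 := by
          linear_combination b i₀ * hzero - b i * hd00
        have hD2 : (a i * b i₀ - a i₀ * b i) * w0.2 = 0 := by
          linear_combination a i * hd00 - a i₀ * hzero
        have hw01 : ¬ (w0.1 = 0 ∧ w0.2 = 0) := fun hh => hw0ne (Prod.ext hh.1 hh.2)
        have hDz : a i * b i₀ - a i₀ * b i = 0 := by
          rcases not_and_or.mp hw01 with h | h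
          · exact (mul_eq_zero.mp hD1).resolve_right h
          · exact (mul_eq_zero.mp hD2).resolve_right h
        exact hpar i i₀ hi (by linarith)
      set z : F × F := (S i₀ * a i₀, S i₀ * b i₀) with hzdef
      set P : Fin n → F := fun i => if i = i₀ then 1
        else (S i * (a i * w0.1 + b i * w0.2)) / (1 + |a i * z.1 + b i * z.2|) with hPdef
      have hPpos : ∀ i, 0 < P i := by
        intro i
        rw [hPdef]
        by_cases h : i = i₀
        · simp [h]
        · simp only [if_neg h]
          apply div_pos
          · exact lt_of_le_of_ne (hd0 i) (Ne.symm (mul_ne_zero (hSne i) (huniq i h)))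
          · have := abs_nonneg (a i * z.1 + b i * z.2); linarith
      obtain ⟨c0, hc0le, hc0pos⟩ : ∃ c0 : F, (∀ i, c0 ≤ P i) ∧ 0 < c0 := by
        refine ⟨Finset.univ.inf' Finset.univ_nonempty P,
          fun i => Finset.inf'_le P (Finset.mem_univ i), ?_⟩
        rw [Finset.lt_inf'_iff]
        exact fun i _ => hPpos i
      refine ⟨w0 + c0 • z, ?_⟩
      intro i
      have hdwi : a i * (w0 + c0 • z).1 + b i * (w0 + c0 • z).2
          = (a i * w0.1 + b i * w0.2) + c0 * (a i * z.1 + b i * z.2) := by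
        simp only [Prod.fst_add, Prod.snd_add, Prod.smul_fst, Prod.smul_snd, smul_eq_mul]; ring
      rw [hdwi]
      by_cases h : i = i₀
      · rw [h]
        have hz1' : z.1 = S i₀ * a i₀ := by rw [hzdef]
        have hz2' : z.2 = S i₀ * b i₀ := by rw [hzdef]
        have hkey : S i₀ * ((a i₀ * w0.1 + b i₀ * w0.2) + c0 * (a i₀ * z.1 + b i₀ * z.2))
            = c0 * (a i₀ * a i₀ + b i₀ * b i₀) := by
          rw [hz1', hz2']
          have h2 := hS2 i₀
          linear_combination hi₀ + (c0 * (a i₀ * a i₀ + b i₀ * b i₀)) * h2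
        rw [hkey]
        have hab : ¬(a i₀ = 0 ∧ b i₀ = 0) := by
          intro hh; exact hnd i₀ (by rw [hh.1, hh.2])
        have habpos : 0 < a i₀ * a i₀ + b i₀ * b i₀ := by
          rcases not_and_or.mp hab with h' | h'
          · nlinarith [mul_self_pos.mpr h', mul_self_nonneg (b i₀)]
          · nlinarith [mul_self_pos.mpr h', mul_self_nonneg (a i₀)]
        exact mul_pos hc0pos habpos
      · have hXpos : 0 < S i * (a i * w0.1 + b i * w0.2) :=
          lt_of_le_of_ne (hd0 i) (Ne.symm (mul_ne_zero (hSne i) (huniq i h)))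
        have hcle := hc0le i
        rw [hPdef] at hcle
        simp only [if_neg h] at hcle
        set Z := a i * z.1 + b i * z.2 with hZ
        have hZpos : (0:F) < 1 + |Z| := by have := abs_nonneg Z; linarith
        have h1 : c0 * (1 + |Z|) ≤ S i * (a i * w0.1 + b i * w0.2) :=
          (le_div_iff₀ hZpos).mp hcle
        have habs : |S i * Z| = |Z| := by
          rcases hSpm i with hh | hh <;> rw [hh] <;> simp
        have h2 : -|Z| ≤ S i * Z := by
          have := neg_abs_le (S i * Z)
          rw [habs] at this
          exact this
        have hexpand : S i * ((a i * w0.1 + b i * w0.2) + c0 * Z)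
            = S i * (a i * w0.1 + b i * w0.2) + c0 * (S i * Z) := by ring
        rw [hexpand]
        have h3 : c0 * (-|Z|) ≤ c0 * (S i * Z) :=
          mul_le_mul_of_nonneg_left h2 (le_of_lt hc0pos)
        rw [mul_add, mul_one] at h1
        rw [mul_neg] at h3
        linarith
  obtain ⟨w, hdw⟩ := hstep2
  -- global orientation
  obtain ⟨σ, hσpm, hT0⟩ := exists_sigma hn a b c V hV ε hε hside
  have hT : ∀ p q r : Fin n, p.val < q.val → q.val < r.val →
      0 < σ * br (V p) (V q) (V r) :=
    fun p q r h1 h2 => lemT_aux hn V σ hσpm hT0 (q.val - p.val) p q r rfl h1 h2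
  -- basic line facts
  have hz2 : ∀ i : Fin n, arrLine a b c i (V i) = 0 := fun i => (hV i).1
  have hz1 : ∀ i : Fin n, arrLine a b c i (V (i-1)) = 0 := by
    intro i
    have := (hV (i-1)).2
    rwa [sub_one_add_one i] at this
  have hfN : ∀ i k : Fin n, arrLine a b c i (V k)
      = a i * (V k - V (i-1)).1 + b i * (V k - V (i-1)).2 := by
    intro i k
    have h0 := hz1 i
    simp only [arrLine, Prod.fst_sub, Prod.snd_sub] at *
    linear_combination h0
  have he0 : ∀ i : Fin n, a i * (V i - V (i-1)).1 + b i * (V i - V (i-1)).2 = 0 := by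
    intro i
    have h0 := hz1 i
    have h1 := hz2 i
    simp only [arrLine, Prod.fst_sub, Prod.snd_sub] at *
    linear_combination h1 - h0
  have hVne : ∀ i : Fin n, V i - V (i-1) ≠ 0 := by
    intro i h
    have heq : V (i-1) = V i := (sub_eq_zero.mp h).symm
    have hs := hside (i+1) (i-1)
      (by rw [add_one_sub_one i]; exact sub_one_ne hn i)
      (fun hh => (add_one_ne_sub_one hn i) hh.symm)
    rw [heq, (hV i).2] at hs
    simp at hs
  -- T : inner/outer indicator of the region
  set T : Fin n → F := fun i => ε i * S i with hTdef
  have hTi : ∀ i, T i = ε i * S i := fun _ => rfl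
  have hTpm : ∀ i, T i = 1 ∨ T i = -1 := by
    intro i
    rw [hTi i]
    rcases hε i with h | h <;> rcases hSpm i with h' | h' <;> rw [h, h'] <;> norm_num
  -- the fundamental inequality linking T with the height function
  have hTH : ∀ i : Fin n, 0 < T i * (σ * ((V i).1 * w.2 - (V i).2 * w.1
      - ((V (i-1)).1 * w.2 - (V (i-1)).2 * w.1))) := by
    intro i
    have hident := cramer (a i) (b i) (V i - V (i-1)) w (V (i+1) - V (i-1)) (he0 i)
    rw [← hfN i (i+1)] at hident
    have hcrw : cross (V i - V (i-1)) w = (V i).1 * w.2 - (V i).2 * w.1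
        - ((V (i-1)).1 * w.2 - (V (i-1)).2 * w.1) := by
      simp only [cross, Prod.fst_sub, Prod.snd_sub]; ring
    have hbr : cross (V i - V (i-1)) (V (i+1) - V (i-1)) = br (V (i-1)) (V i) (V (i+1)) := rfl
    rw [hcrw, hbr] at hident
    have hA : 0 < S i * (a i * w.1 + b i * w.2) := hdw i
    have hB : 0 < σ * br (V (i-1)) (V i) (V (i+1)) :=
      hT0 i (i+1) (fun hh => (add_one_ne_sub_one hn i) hh) (add_one_ne hn i)
    have hC : 0 < ε i * arrLine a b c i (V (i+1)) :=
      hside i (i+1) (fun hh => (add_one_ne_sub_one hn i) hh) (add_one_ne hn i)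
    have hpos1 := mul_pos hA hB
    have hkey : (S i * (a i * w.1 + b i * w.2)) * (σ * br (V (i-1)) (V i) (V (i+1)))
        = (ε i * arrLine a b c i (V (i+1))) * (T i * (σ * ((V i).1 * w.2 - (V i).2 * w.1
          - ((V (i-1)).1 * w.2 - (V (i-1)).2 * w.1)))) := by
      rw [hTi i]
      linear_combination (S i * σ) * hident
        - (S i * σ * arrLine a b c i (V (i+1)) * ((V i).1 * w.2 - (V i).2 * w.1
          - ((V (i-1)).1 * w.2 - (V (i-1)).2 * w.1))) * (hε2 i)
    rw [hkey] at hpos1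
    by_contra hle
    push_neg at hle
    have hnp := mul_nonpos_of_nonneg_of_nonpos (le_of_lt hC) hle
    linarith
  -- existence of an outer line
  have hexist_neg : ∃ j : Fin n, T j = -1 := by
    by_contra hno
    push_neg at hno
    have hall1 : ∀ j, T j = 1 := fun j => (hTpm j).resolve_right (hno j)
    have hpos : ∀ i ∈ Finset.univ, (0:F) < σ * (((V i).1 * w.2 - (V i).2 * w.1)
        - ((V (i-1)).1 * w.2 - (V (i-1)).2 * w.1)) := by
      intro i _
      have h := hTH i
      rw [hall1 i, one_mul] at h
      exact h
    have hsum : ∑ i : Fin n, σ * (((V i).1 * w.2 - (V i).2 * w.1)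
        - ((V (i-1)).1 * w.2 - (V (i-1)).2 * w.1)) = 0 := by
      rw [← Finset.mul_sum]
      have hsplit : ∑ i : Fin n, (((V i).1 * w.2 - (V i).2 * w.1)
          - ((V (i-1)).1 * w.2 - (V (i-1)).2 * w.1))
          = (∑ i : Fin n, ((V i).1 * w.2 - (V i).2 * w.1))
            - ∑ i : Fin n, ((V (i-1)).1 * w.2 - (V (i-1)).2 * w.1) :=
        Finset.sum_sub_distrib _ _
      have hre : ∑ i : Fin n, ((V (i-1)).1 * w.2 - (V (i-1)).2 * w.1)
          = ∑ i : Fin n, ((V i).1 * w.2 - (V i).2 * w.1) :=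
        Fintype.sum_equiv (Equiv.subRight (1 : Fin n)) _ _ (fun i => rfl)
      rw [hsplit, hre, sub_self, mul_zero]
    have hgt := Finset.sum_pos hpos Finset.univ_nonempty
    rw [hsum] at hgt
    exact lt_irrefl 0 hgt
  -- edge analysis
  have hedge : ∀ i : Fin n, ∀ p : F × F, arrLine a b c i p = 0 →
      (∀ j, j ≠ i → 0 < S j * arrLine a b c j p) →
      ((T (i-1) = -1 → T (i+1) = -1 → False) ∧
       (T (i-1) = 1 → T (i+1) = 1 → ∀ j, j ≠ i → T j = 1)) := by
    intro i p hp hreg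
    have hu : a i * (p - V (i-1)).1 + b i * (p - V (i-1)).2 = 0 := by
      have h0 := hz1 i
      simp only [arrLine, Prod.fst_sub, Prod.snd_sub] at *
      linear_combination hp - h0
    have hab : ¬(a i = 0 ∧ b i = 0) := by
      intro hh; exact hnd i (by rw [hh.1, hh.2])
    have hcr0 : cross (V i - V (i-1)) (p - V (i-1)) = 0 :=
      cross_eq_zero (a i) (b i) _ _ hab (he0 i) hu
    obtain ⟨τ, hτ⟩ := exists_scalar _ _ (hVne i) hcr0
    have hc1 : p.1 - (V (i-1)).1 = τ * ((V i).1 - (V (i-1)).1) := by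
      have := congrArg Prod.fst hτ
      simpa [Prod.smul_def, smul_eq_mul] using this
    have hc2 : p.2 - (V (i-1)).2 = τ * ((V i).2 - (V (i-1)).2) := by
      have := congrArg Prod.snd hτ
      simpa [Prod.smul_def, smul_eq_mul] using this
    have haff : ∀ j : Fin n, arrLine a b c j p
        = (1 - τ) * arrLine a b c j (V (i-1)) + τ * arrLine a b c j (V i) := by
      intro j
      simp only [arrLine]
      linear_combination (a j) * hc1 + (b j) * hc2
    have hplusεf : 0 < ε (i+1) * arrLine a b c (i+1) (V (i-1)) :=
      hside (i+1) (i-1)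
        (by rw [add_one_sub_one i]; exact sub_one_ne hn i)
        (fun hh => (add_one_ne_sub_one hn i) hh.symm)
    have hminusεf : 0 < ε (i-1) * arrLine a b c (i-1) (V i) :=
      hside (i-1) i
        (fun hh => (sub_two_ne hn i) hh.symm)
        (fun hh => (sub_one_ne hn i) hh.symm)
    have hrp := hreg (i+1) (add_one_ne hn i)
    rw [haff (i+1), (hV i).2, mul_zero, add_zero] at hrp
    have hrm := hreg (i-1) (sub_one_ne hn i)
    rw [haff (i-1), hz2 (i-1), mul_zero, zero_add] at hrm
    have hTplus : 0 < T (i+1) * ((1 - τ) * (ε (i+1) * arrLine a b c (i+1) (V (i-1)))) := by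
      have heq : T (i+1) * ((1 - τ) * (ε (i+1) * arrLine a b c (i+1) (V (i-1))))
          = S (i+1) * ((1 - τ) * arrLine a b c (i+1) (V (i-1))) := by
        rw [hTi (i+1)]
        linear_combination (S (i+1) * (1 - τ) * arrLine a b c (i+1) (V (i-1))) * hε2 (i+1)
      rw [heq]
      exact hrp
    have hTminus : 0 < T (i-1) * (τ * (ε (i-1) * arrLine a b c (i-1) (V i))) := by
      have heq : T (i-1) * (τ * (ε (i-1) * arrLine a b c (i-1) (V i)))
          = S (i-1) * (τ * arrLine a b c (i-1) (V i)) := by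
        rw [hTi (i-1)]
        linear_combination (S (i-1) * τ * arrLine a b c (i-1) (V i)) * hε2 (i-1)
      rw [heq]
      exact hrm
    constructor
    · intro hm1 hp1
      rw [hm1] at hTminus
      rw [hp1] at hTplus
      have h1' : τ * (ε (i-1) * arrLine a b c (i-1) (V i)) < 0 := by linarith
      have h2' : (1 - τ) * (ε (i+1) * arrLine a b c (i+1) (V (i-1))) < 0 := by linarith
      have hτneg : τ < 0 := by
        by_contra hh
        push_neg at hh
        exact absurd h1' (not_lt.mpr (mul_nonneg hh (le_of_lt hminusεf)))
      have hτgt : 1 < τ := by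
        by_contra hh
        push_neg at hh
        exact absurd h2' (not_lt.mpr (mul_nonneg (by linarith) (le_of_lt hplusεf)))
      linarith
    · intro hm1 hp1 j hj
      rw [hm1, one_mul] at hTminus
      rw [hp1, one_mul] at hTplus
      have hτpos : 0 < τ := by
        by_contra hh
        push_neg at hh
        have := mul_nonpos_of_nonpos_of_nonneg hh (le_of_lt hminusεf)
        linarith
      have hτlt : τ < 1 := by
        by_contra hh
        push_neg at hh
        have := mul_nonpos_of_nonpos_of_nonneg (show 1 - τ ≤ 0 by linarith)
          (le_of_lt hplusεf)
        linarith
      by_cases hji : j = i + 1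
      · rw [hji]; exact hp1
      by_cases hji' : j = i - 1
      · rw [hji']; exact hm1
      have hεf1 : 0 < ε j * arrLine a b c j (V (i-1)) :=
        hside j (i-1)
          (fun hh => hj (sub_left_injective hh).symm)
          (fun hh => hji' hh.symm)
      have hεf2 : 0 < ε j * arrLine a b c j (V i) :=
        hside j i
          (fun hh => hji (sub_eq_iff_eq_add.mp hh.symm))
          (fun hh => hj hh.symm)
      have hcomb : 0 < ε j * arrLine a b c j p := by
        rw [haff j]
        have heqc : ε j * ((1 - τ) * arrLine a b c j (V (i-1)) + τ * arrLine a b c j (V i))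
            = (1 - τ) * (ε j * arrLine a b c j (V (i-1)))
              + τ * (ε j * arrLine a b c j (V i)) := by ring
        rw [heqc]
        exact add_pos (mul_pos (by linarith) hεf1) (mul_pos hτpos hεf2)
      have hregj := hreg j hj
      have hfne : arrLine a b c j p ≠ 0 := by
        intro h0; rw [h0, mul_zero] at hcomb; exact lt_irrefl 0 hcomb
      have hprod2 : 0 < (S j * arrLine a b c j p) * (ε j * arrLine a b c j p) :=
        mul_pos hregj hcomb
      have heq2 : (S j * arrLine a b c j p) * (ε j * arrLine a b c j p)
          = T j * (arrLine a b c j p * arrLine a b c j p) := by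
        rw [hTi j]; ring
      rw [heq2] at hprod2
      have hTj : 0 < T j := by
        by_contra hle
        push_neg at hle
        have := mul_nonpos_of_nonpos_of_nonneg hle
          (mul_self_nonneg (arrLine a b c j p))
        linarith
      rcases hTpm j with h | h
      · exact h
      · rw [h] at hTj; norm_num at hTj
  -- final counting
  have hgon : arrGonality a b c δ = Set.ncard {i : Fin n | ∃ p : F × F,
      arrLine a b c i p = 0 ∧ ∀ j : Fin n, j ≠ i → 0 < S j * arrLine a b c j p} := rfl
  rw [hgon]
  set E : Set (Fin n) := {i | ∃ p : F × F, arrLine a b c i p = 0 ∧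
      ∀ j : Fin n, j ≠ i → 0 < S j * arrLine a b c j p} with hEdef
  by_cases hI : ∃ i ∈ E, T (i-1) = 1 ∧ T (i+1) = 1
  · obtain ⟨i, hiE, h1, h2⟩ := hI
    obtain ⟨p, hp, hpreg⟩ := hiE
    have hall := (hedge i p hp hpreg).2 h1 h2
    obtain ⟨j0, hj0⟩ := hexist_neg
    have hj0i : j0 = i := by
      by_contra hne'
      have := hall j0 hne'
      rw [this] at hj0; norm_num at hj0
    have hsub : E ⊆ {i - 1, i, i + 1} := by
      intro i' hi'
      by_contra hnotin
      simp only [Set.mem_insert_iff, Set.mem_singleton_iff] at hnotin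
      push_neg at hnotin
      obtain ⟨hn1, hn2, hn3⟩ := hnotin
      obtain ⟨p', hp', hpreg'⟩ := hi'
      have ha1 : T (i' - 1) = 1 := hall _ (fun h => hn3 (sub_eq_iff_eq_add.mp h))
      have ha2 : T (i' + 1) = 1 := hall _ (by
        intro h
        exact hn1 (by rw [← h, add_sub_cancel_right]))
      have hall' := (hedge i' p' hp' hpreg').2 ha1 ha2
      have hTi := hall' i (Ne.symm hn2)
      rw [hj0i] at hj0
      rw [hTi] at hj0
      norm_num at hj0
    have hle3 : ({i - 1, i, i + 1} : Set (Fin n)).ncard ≤ 3 := by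
      have e1 := Set.ncard_insert_le (i-1) ({i, i+1} : Set (Fin n))
      have e2 := Set.ncard_insert_le i ({i+1} : Set (Fin n))
      have e3 := Set.ncard_singleton (i+1)
      omega
    have := Set.ncard_le_ncard hsub (Set.toFinite _)
    omega
  · push_neg at hI
    have hmix : ∀ i ∈ E, T (i-1) ≠ T (i+1) := by
      intro i hiE
      obtain ⟨p, hp, hpreg⟩ := hiE
      have hboth := (hedge i p hp hpreg).1
      rcases hTpm (i-1) with ha | ha <;> rcases hTpm (i+1) with hb | hb
      · exact absurd hb (hI i ⟨p, hp, hpreg⟩ ha)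
      · rw [ha, hb]; norm_num
      · rw [ha, hb]; norm_num
      · exact (hboth ha hb).elim
    set C : Set (Fin n) := {x | T x ≠ T (x + 1)} with hCdef
    have hEsub : E ⊆ C ∪ (fun x => x + 1) '' C := by
      intro i hiE
      have hne' := hmix i hiE
      by_cases hc : T (i-1) = T i
      · left
        show T i ≠ T (i + 1)
        intro h
        exact hne' (by rw [hc, h])
      · right
        refine ⟨i - 1, ?_, sub_one_add_one i⟩
        show T (i-1) ≠ T (i - 1 + 1)
        rw [sub_one_add_one i]
        exact hc
    have hC2 : C.ncard ≤ 2 := by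
      by_contra hgt
      push_neg at hgt
      rw [Set.two_lt_ncard (Set.toFinite C)] at hgt
      obtain ⟨x, hx, y, hy, z, hz, hxy, hxz, hyz⟩ := hgt
      have hflip : ∀ u : Fin n, u ∈ C → T (u + 1) = -T u := by
        intro u hu
        have hu' : T u ≠ T (u + 1) := hu
        rcases hTpm u with h | h <;> rcases hTpm (u+1) with h' | h' <;>
          rw [h, h'] <;> rw [h, h'] at hu' <;> first | (exact absurd rfl hu') | norm_num
      have hpair : ∃ u u' : Fin n, u ∈ C ∧ u' ∈ C ∧ u ≠ u' ∧ T u = T u' := by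
        rcases hTpm x with hTx | hTx <;> rcases hTpm y with hTy | hTy <;>
          rcases hTpm z with hTz | hTz
        · exact ⟨x, y, hx, hy, hxy, by rw [hTx, hTy]⟩
        · exact ⟨x, y, hx, hy, hxy, by rw [hTx, hTy]⟩
        · exact ⟨x, z, hx, hz, hxz, by rw [hTx, hTz]⟩
        · exact ⟨y, z, hy, hz, hyz, by rw [hTy, hTz]⟩
        · exact ⟨y, z, hy, hz, hyz, by rw [hTy, hTz]⟩
        · exact ⟨x, z, hx, hz, hxz, by rw [hTx, hTz]⟩
        · exact ⟨x, y, hx, hy, hxy, by rw [hTx, hTy]⟩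
        · exact ⟨x, y, hx, hy, hxy, by rw [hTx, hTy]⟩
      obtain ⟨u, u', huC, hu'C, huu, hTuu⟩ := hpair
      obtain ⟨u1, u2, h1C, h2C, h12, hT12⟩ : ∃ u1 u2 : Fin n, u1 ∈ C ∧ u2 ∈ C ∧
          u1.val < u2.val ∧ T u1 = T u2 := by
        have hvalne : u.val ≠ u'.val := fun h => huu (Fin.ext h)
        rcases Nat.lt_or_ge u.val u'.val with h | h
        · exact ⟨u, u', huC, hu'C, h, hTuu⟩
        · exact ⟨u', u, hu'C, huC, by omega, hTuu.symm⟩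
      have hs0pm : T u1 = 1 ∨ T u1 = -1 := hTpm u1
      have hf1 : T (u1 + 1) = -T u1 := hflip u1 h1C
      have hf2 : T (u2 + 1) = -T u1 := by rw [hT12]; exact hflip u2 h2C
      have hv2 := u2.isLt
      have hval11 : (u1 + 1).val = u1.val + 1 := by
        rw [val_add_one hn u1, if_neg (by omega)]
      have hne12 : u1.val + 1 ≠ u2.val := by
        intro h
        have heq' : u1 + 1 = u2 := Fin.ext (by rw [hval11]; exact h)
        rw [heq', ← hT12] at hf1
        rcases hs0pm with h' | h' <;> rw [h'] at hf1 <;> norm_num at hf1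
      have hquad : ∀ (α β : F) (g : Fin n → F), (∀ k, g k = α * (V k).1 + β * (V k).2) →
          ∀ Q1 Q2 Q3 Q4 : Fin n, Q1.val < Q2.val → Q2.val < Q3.val → Q3.val < Q4.val →
          g Q1 < g Q2 → g Q3 < g Q2 → g Q1 < g Q4 → g Q3 < g Q4 → False :=
        fun α β g hg Q1 Q2 Q3 Q4 a1 a2 a3 b1 b2 b3 b4 =>
          quad_lemma V σ hσpm hT α β Q1 Q2 Q3 Q4 a1 a2 a3 g hg b1 b2 b3 b4
      rcases Nat.lt_or_ge (u2.val + 1) n with hcase | hcase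
      · have hval21 : (u2 + 1).val = u2.val + 1 := by
          rw [val_add_one hn u2, if_neg (by omega)]
        exact alt_false hn V σ hσpm hT hquad w T (T u1) hs0pm hTH u1 (u1+1) u2 (u2+1)
          (by omega) (by omega) (by omega)
          rfl hf1 hT12.symm hf2
      · have hval21 : (u2 + 1).val = 0 := by
          rw [val_add_one hn u2, if_pos (by omega)]
        have hu1pos : 0 < u1.val := by
          by_contra h0
          push_neg at h0
          have h00 : u1.val = 0 := by omega
          have heq' : u2 + 1 = u1 := Fin.ext (by rw [hval21, h00])
          rw [heq'] at hf2
          rcases hs0pm with h' | h' <;> rw [h'] at hf2 <;> norm_num at hf2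
        have hms0pm : -T u1 = 1 ∨ -T u1 = -1 := by
          rcases hs0pm with h' | h' <;> rw [h'] <;> norm_num
        exact alt_false hn V σ hσpm hT hquad w T (-T u1) hms0pm hTH (u2+1) u1 (u1+1) u2
          (by omega) (by omega) (by omega)
          hf2 (by rw [neg_neg]) hf1 (by rw [neg_neg]; exact hT12.symm)
    have himg : ((fun x : Fin n => x + 1) '' C).ncard ≤ C.ncard :=
      Set.ncard_image_le (Set.toFinite C)
    have huni := Set.ncard_union_le C ((fun x : Fin n => x + 1) '' C)
    have hEle := Set.ncard_le_ncard hEsub (Set.toFinite _)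
    omega
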